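/- If a semantic linear Horn system has a solution, then both μ and ν are solutions of it, and every solution R satisfies μ j ⊆ R j and R j ⊆ ν j for every j : Fin n; that is, the solutions are exactly those tuples between μ and ν in the componentwise inclusion order that satisfy all clauses, with μ the least and ν the greatest solution. -/
import Mathlib


universe u

/-- A semantic Horn system over `M` with `n` predicate places of arities `k`. -/
structure HornSystem (M : Type u) (n : ℕ) (k : Fin n → ℕ) where
  /-- index type for base clauses -/
  BaseIdx : Type u
  baseTarget : BaseIdx → Fin n
  BaseParam : BaseIdx → Type u
  baseC : (b : BaseIdx) → BaseParam b → Prop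
  baseHead : (b : BaseIdx) → BaseParam b → Fin (k (baseTarget b)) → M
  /-- index type for induction clauses -/
  IndIdx : Type u
  indTarget : IndIdx → Fin n
  IndParam : IndIdx → Type u
  indC : (c : IndIdx) → IndParam c → Prop
  indLen : IndIdx → ℕ
  indLenPos : ∀ c, 1 ≤ indLen c
  indBodyIdx : (c : IndIdx) → Fin (indLen c) → Fin n
  indBody : (c : IndIdx) → (l : Fin (indLen c)) → IndParam c → Fin (k (indBodyIdx c l)) → M
  indHead : (c : IndIdx) → IndParam c → Fin (k (indTarget c)) → M
  /-- index type for end clauses -/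
  EndIdx : Type u
  EndParam : EndIdx → Type u
  endC : (e : EndIdx) → EndParam e → Prop
  endLen : EndIdx → ℕ
  endLenPos : ∀ e, 1 ≤ endLen e
  endBodyIdx : (e : EndIdx) → Fin (endLen e) → Fin n
  endBody : (e : EndIdx) → (l : Fin (endLen e)) → EndParam e → Fin (k (endBodyIdx e l)) → M

namespace HornSystem

variable {M : Type u} {n : ℕ} {k : Fin n → ℕ}

/-- `R` satisfies all base clauses. -/
def SatBase (S : HornSystem M n k) (R : ∀ j, Set (Fin (k j) → M)) : Prop :=
  ∀ b p, S.baseC b p → S.baseHead b p ∈ R (S.baseTarget b)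

/-- `R` satisfies all induction clauses. -/
def SatInd (S : HornSystem M n k) (R : ∀ j, Set (Fin (k j) → M)) : Prop :=
  ∀ c p, S.indC c p → (∀ l, S.indBody c l p ∈ R (S.indBodyIdx c l)) →
    S.indHead c p ∈ R (S.indTarget c)

/-- `R` satisfies all end clauses. -/
def SatEnd (S : HornSystem M n k) (R : ∀ j, Set (Fin (k j) → M)) : Prop :=
  ∀ e, ¬ ∃ p, S.endC e p ∧ ∀ l, S.endBody e l p ∈ R (S.endBodyIdx e l)

/-- `R` is a solution of the system: it satisfies every clause. -/
def IsSolution (S : HornSystem M n k) (R : ∀ j, Set (Fin (k j) → M)) : Prop :=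
  S.SatBase R ∧ S.SatInd R ∧ S.SatEnd R

/-- The immediate consequence operator of the system. -/
def F (S : HornSystem M n k) (R : ∀ j, Set (Fin (k j) → M)) :
    ∀ j, Set (Fin (k j) → M) := fun j =>
  {a | (∃ b, ∃ h : S.baseTarget b = j, ∃ p, S.baseC b p ∧ a = h ▸ S.baseHead b p) ∨
       (∃ c, ∃ h : S.indTarget c = j, ∃ p, S.indC c p ∧
          (∀ l, S.indBody c l p ∈ R (S.indBodyIdx c l)) ∧ a = h ▸ S.indHead c p)}

theorem F_mono (S : HornSystem M n k) : Monotone S.F := by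
  intro R R' h j a ha
  rcases ha with ⟨b, hb, p, hC, ha⟩ | ⟨c, hc, p, hC, hbody, ha⟩
  · exact Or.inl ⟨b, hb, p, hC, ha⟩
  · exact Or.inr ⟨c, hc, p, hC, fun l => h _ (hbody l), ha⟩

/-- The immediate consequence operator, bundled as a monotone map. -/
def Fhom (S : HornSystem M n k) :
    (∀ j, Set (Fin (k j) → M)) →o (∀ j, Set (Fin (k j) → M)) :=
  ⟨S.F, S.F_mono⟩

/-- The least fixed point of the immediate consequence operator
(exists by the Knaster–Tarski theorem). -/
def mu (S : HornSystem M n k) : ∀ j, Set (Fin (k j) → M) :=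
  OrderHom.lfp S.Fhom

end HornSystem
/-- A semantic dual Horn system over `M` with `n` predicate places of arities `k`. -/
structure DualHornSystem (M : Type u) (n : ℕ) (k : Fin n → ℕ) where
  /-- index type of clauses -/
  Idx : Type u
  Param : Idx → Type u
  C : (c : Idx) → Param c → Prop
  /-- at most one body atom: optionally an index `i` together with a body map -/
  body : (c : Idx) → Option ((i : Fin n) × (Param c → Fin (k i) → M))
  hLen : Idx → ℕ
  hIdx : (c : Idx) → Fin (hLen c) → Fin n
  hMap : (c : Idx) → (l : Fin (hLen c)) → Param c → Fin (k (hIdx c l)) → M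

namespace DualHornSystem

variable {M : Type u} {n : ℕ} {k : Fin n → ℕ}

/-- `R` is a solution of the dual Horn system: it satisfies every clause. -/
def IsSolution (D : DualHornSystem M n k) (R : ∀ j, Set (Fin (k j) → M)) : Prop :=
  ∀ c p, D.C c p → (∀ b ∈ D.body c, b.2 p ∈ R b.1) →
    ∃ l, D.hMap c l p ∈ R (D.hIdx c l)

/-- The dualization of a dual Horn system, a semantic Horn system. -/
def dualize (D : DualHornSystem M n k) : HornSystem M n k where
  BaseIdx := {c : D.Idx // (D.body c).isSome ∧ D.hLen c = 0}
  baseTarget := fun b => ((D.body b.1).get b.2.1).1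
  BaseParam := fun b => D.Param b.1
  baseC := fun b => D.C b.1
  baseHead := fun b => ((D.body b.1).get b.2.1).2
  IndIdx := {c : D.Idx // (D.body c).isSome ∧ 1 ≤ D.hLen c}
  indTarget := fun c => ((D.body c.1).get c.2.1).1
  IndParam := fun c => D.Param c.1
  indC := fun c => D.C c.1
  indLen := fun c => D.hLen c.1
  indLenPos := fun c => c.2.2
  indBodyIdx := fun c => D.hIdx c.1
  indBody := fun c => D.hMap c.1
  indHead := fun c => ((D.body c.1).get c.2.1).2
  EndIdx := {c : D.Idx // D.body c = none ∧ 1 ≤ D.hLen c}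
  EndParam := fun e => D.Param e.1
  endC := fun e => D.C e.1
  endLen := fun e => D.hLen e.1
  endLenPos := fun e => e.2.2
  endBodyIdx := fun e => D.hIdx e.1
  endBody := fun e => D.hMap e.1

end DualHornSystem
namespace HornSystem

variable {M : Type u} {n : ℕ} {k : Fin n → ℕ}

/-- A linear Horn system (every induction and end clause has exactly one body atom),
viewed as a semantic dual Horn system: each base clause becomes a clause with no
body atom and one head atom, each induction clause a clause with one body atom and
one head atom, and each end clause a clause with one body atom and empty head. -/
def toDual (S : HornSystem M n k)
    (hind : ∀ c, S.indLen c = 1) (hend : ∀ e, S.endLen e = 1) :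
    DualHornSystem M n k where
  Idx := S.BaseIdx ⊕ S.IndIdx ⊕ S.EndIdx
  Param := fun c => match c with
    | Sum.inl b => S.BaseParam b
    | Sum.inr (Sum.inl c) => S.IndParam c
    | Sum.inr (Sum.inr e) => S.EndParam e
  C := fun c => match c with
    | Sum.inl b => S.baseC b
    | Sum.inr (Sum.inl c) => S.indC c
    | Sum.inr (Sum.inr e) => S.endC e
  body := fun c => match c with
    | Sum.inl _ => none
    | Sum.inr (Sum.inl c) =>
        some ⟨S.indBodyIdx c ⟨0, S.indLenPos c⟩, S.indBody c ⟨0, S.indLenPos c⟩⟩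
    | Sum.inr (Sum.inr e) =>
        some ⟨S.endBodyIdx e ⟨0, S.endLenPos e⟩, S.endBody e ⟨0, S.endLenPos e⟩⟩
  hLen := fun c => match c with
    | Sum.inl _ => 1
    | Sum.inr (Sum.inl _) => 1
    | Sum.inr (Sum.inr _) => 0
  hIdx := fun c => match c with
    | Sum.inl b => fun _ => S.baseTarget b
    | Sum.inr (Sum.inl c) => fun _ => S.indTarget c
    | Sum.inr (Sum.inr _) => fun l => l.elim0
  hMap := fun c => match c with
    | Sum.inl b => fun _ => S.baseHead b
    | Sum.inr (Sum.inl c) => fun _ => S.indHead c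
    | Sum.inr (Sum.inr _) => fun l => l.elim0

end HornSystem

namespace HornSystem

variable {M : Type u} {n : ℕ} {k : Fin n → ℕ}

theorem F_le_of_solution (S : HornSystem M n k) {R} (h : S.IsSolution R) : S.F R ≤ R := by
  intro j a ha
  rcases ha with ⟨b, rfl, p, hC, rfl⟩ | ⟨c, rfl, p, hC, hbody, rfl⟩
  · exact h.1 b p hC
  · exact h.2.1 c p hC hbody

theorem mu_le_of_solution (S : HornSystem M n k) {R} (h : S.IsSolution R) : S.mu ≤ R :=
  OrderHom.lfp_le _ (F_le_of_solution S h)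

theorem mu_isSolution (S : HornSystem M n k)
    (hsol : ∃ R : ∀ j, Set (Fin (k j) → M), S.IsSolution R) : S.IsSolution S.mu := by
  obtain ⟨R, hR⟩ := hsol
  have hle := mu_le_of_solution S hR
  have hfix : S.F S.mu = S.mu := S.Fhom.map_lfp
  refine ⟨?_, ?_, ?_⟩
  · intro b p hC
    rw [← hfix]
    exact Or.inl ⟨b, rfl, p, hC, rfl⟩
  · intro c p hC hb
    rw [← hfix]
    exact Or.inr ⟨c, rfl, p, hC, hb, rfl⟩
  · rintro e ⟨p, hC, hb⟩
    exact hR.2.2 e ⟨p, hC, fun l => hle _ (hb l)⟩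

end HornSystem

/-- For a semantic linear Horn system (every induction and end clause
has exactly one body atom) that has a solution: both `μ` (the least fixed point of its
immediate consequence operator) and `ν` (the componentwise complement of the least fixed
point of the immediate consequence operator of the dualization of the system viewed as
a dual Horn system) are solutions, and every solution `R` satisfies
`μ j ⊆ R j` and `R j ⊆ ν j` for every `j`. -/
theorem linearHornSystem_mu_nu_solutions {M : Type u} {n : ℕ} {k : Fin n → ℕ}
    (S : HornSystem M n k)
    (hind : ∀ c, S.indLen c = 1) (hend : ∀ e, S.endLen e = 1)
    (hsol : ∃ R : ∀ j, Set (Fin (k j) → M), S.IsSolution R) :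
    S.IsSolution S.mu ∧
    S.IsSolution (fun j => (((S.toDual hind hend).dualize.mu) j)ᶜ) ∧
    ∀ R : ∀ j, Set (Fin (k j) → M), S.IsSolution R →
      ∀ j, S.mu j ⊆ R j ∧ R j ⊆ (((S.toDual hind hend).dualize.mu) j)ᶜ := by
  obtain ⟨R0, hR0⟩ := hsol
  set S' := (S.toDual hind hend).dualize with hS'
  -- the complement of any solution of S is a solution of S'
  have key : ∀ R, S.IsSolution R → S'.IsSolution (fun j => (R j)ᶜ) := by
    intro R hR
    refine ⟨?_, ?_, ?_⟩
    · rintro ⟨b | c | e, hb⟩ p hC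
      · exact absurd hb.1 (by simp [hS', HornSystem.toDual, DualHornSystem.dualize])
      · exact absurd hb.2 (by simp [hS', HornSystem.toDual, DualHornSystem.dualize])
      · intro hmem
        refine hR.2.2 e ⟨p, hC, fun l => ?_⟩
        have hl : l = ⟨0, S.endLenPos e⟩ :=
          Fin.ext (Nat.lt_one_iff.mp (hend e ▸ l.isLt))
        rw [hl]; exact hmem
    · rintro ⟨b | c | e, hb⟩ p hC hbody
      · exact absurd hb.1 (by simp [hS', HornSystem.toDual, DualHornSystem.dualize])
      · intro hmem
        refine hbody ⟨0, Nat.one_pos⟩ ?_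
        refine hR.2.1 c p hC fun l => ?_
        have hl : l = ⟨0, S.indLenPos c⟩ :=
          Fin.ext (Nat.lt_one_iff.mp (hind c ▸ l.isLt))
        rw [hl]; exact hmem
      · exact absurd hb.2 (by simp [hS', HornSystem.toDual, DualHornSystem.dualize])
    · rintro ⟨b | c | e, hb⟩ ⟨p, hC, hbody⟩
      · exact hbody ⟨0, Nat.one_pos⟩ (hR.1 b p hC)
      · exact absurd hb.1 (by simp [hS', HornSystem.toDual, DualHornSystem.dualize])
      · exact absurd hb.1 (by simp [hS', HornSystem.toDual, DualHornSystem.dualize])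
  have hsol' : ∃ Q, S'.IsSolution Q := ⟨_, key R0 hR0⟩
  have hmu' := S'.mu_isSolution hsol'
  have hfix' : S'.F S'.mu = S'.mu := S'.Fhom.map_lfp
  refine ⟨S.mu_isSolution ⟨R0, hR0⟩, ⟨?_, ?_, ?_⟩, fun R hR j =>
    ⟨S.mu_le_of_solution hR j, fun a ha hma => (S'.mu_le_of_solution (key R hR) j hma) ha⟩⟩
  · -- ν satisfies base clauses of S
    intro b p hC hmem
    exact hmu'.2.2 ⟨Sum.inl b, rfl, Nat.le_refl 1⟩ ⟨p, hC, fun _ => hmem⟩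
  · -- ν satisfies induction clauses of S
    intro c p hC hbody hmem
    refine hbody ⟨0, S.indLenPos c⟩ ?_
    have : S.indBody c ⟨0, S.indLenPos c⟩ p ∈
        S'.F S'.mu (S.indBodyIdx c ⟨0, S.indLenPos c⟩) :=
      Or.inr ⟨⟨Sum.inr (Sum.inl c), rfl, Nat.le_refl 1⟩, rfl, p, hC, fun _ => hmem, rfl⟩
    rwa [hfix'] at this
  · -- ν satisfies end clauses of S
    rintro e ⟨p, hC, hbody⟩
    refine hbody ⟨0, S.endLenPos e⟩ ?_
    have : S.endBody e ⟨0, S.endLenPos e⟩ p ∈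
        S'.F S'.mu (S.endBodyIdx e ⟨0, S.endLenPos e⟩) :=
      Or.inl ⟨⟨Sum.inr (Sum.inr e), rfl, rfl⟩, rfl, p, hC, rfl⟩
    rwa [hfix'] at this
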